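/- If t ≥ m + n, then the family of linear maps (T_π), indexed by all set partitions π of Fin m ⊕ Fin n, is linearly independent in the space of k-linear maps from U_t^{⊗n} to U_t^{⊗m}. (The last assertion of Theorem 4.1: Deligne's functor ψ_t is injective on Hom-spaces when t ≥ m + n.) -/

import Mathlib

open scoped Classical

noncomputable section

/-- The partition operator `T_π : U_t^{⊗n} → U_t^{⊗m}` attached to a set partition `π` of
`Fin m ⊕ Fin n` (encoded as an equivalence relation, i.e. a `Setoid`). -/
def partitionMap (k : Type*) [Field k] (t m n : ℕ) (π : Setoid (Fin m ⊕ Fin n)) :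
    ((Fin n → Fin t) → k) →ₗ[k] ((Fin m → Fin t) → k) :=
  Matrix.mulVecLin (Matrix.of fun (J : Fin m → Fin t) (I : Fin n → Fin t) =>
    if ∀ x y : Fin m ⊕ Fin n, π.r x y → Sum.elim J I x = Sum.elim J I y then (1 : k) else 0)

instance setoidFinite (α : Type*) [Finite α] : Finite (Setoid α) :=
  Finite.of_injective (fun s : Setoid α => s.r) (by
    rintro ⟨r, hr⟩ ⟨s, hs⟩ hrs
    obtain rfl : r = s := hrs
    rfl)

/-- If `t ≥ m + n`, the family of operators `T_π`, indexed by the set partitions of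
`Fin m ⊕ Fin n`, is linearly independent in `Hom_k(U_t^{⊗n}, U_t^{⊗m})`. -/
theorem stmt2 (k : Type*) [Field k] [CharZero k] (t m n : ℕ) (h : m + n ≤ t) :
    LinearIndependent k (fun π : Setoid (Fin m ⊕ Fin n) => partitionMap k t m n π) := by
  have : Fintype (Setoid (Fin m ⊕ Fin n)) := Fintype.ofFinite _
  rw [Fintype.linearIndependent_iff]
  intro g hg
  -- for each π, a coloring K realizing π as its kernel
  have key : ∀ π : Setoid (Fin m ⊕ Fin n), ∃ K : Fin m ⊕ Fin n → Fin t,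
      ∀ x y, K x = K y ↔ π.r x y := by
    intro π
    have hcard : Fintype.card (Quotient π) ≤ Fintype.card (Fin t) := by
      refine le_trans (Fintype.card_quotient_le _) ?_
      simpa using h
    obtain ⟨f⟩ := Function.Embedding.nonempty_of_card_le hcard
    refine ⟨fun x => f (Quotient.mk π x), fun x y => ?_⟩
    rw [f.injective.eq_iff, Quotient.eq]
  -- key evaluation identity
  have eval : ∀ π : Setoid (Fin m ⊕ Fin n),
      ∑ σ : Setoid (Fin m ⊕ Fin n), (if σ ≤ π then g σ else 0) = 0 := by
    intro π
    obtain ⟨K, hK⟩ := key π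
    have h0 := congrFun (congrFun (congrArg DFunLike.coe hg)
      (Pi.single (K ∘ Sum.inr) 1)) (K ∘ Sum.inl)
    simp only [LinearMap.coe_sum, Finset.sum_apply, LinearMap.zero_apply,
      Pi.zero_apply] at h0
    have hterm : ∀ σ : Setoid (Fin m ⊕ Fin n),
        (g σ • partitionMap k t m n σ) (Pi.single (K ∘ Sum.inr) 1) (K ∘ Sum.inl)
          = if σ ≤ π then g σ else 0 := by
      intro σ
      simp only [LinearMap.smul_apply, Pi.smul_apply, partitionMap, Matrix.mulVecLin_apply,
        Matrix.mulVec_single, Matrix.of_apply, smul_eq_mul, mul_one,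
        MulOpposite.op_one, one_smul, Matrix.col, Matrix.transpose_apply]
      have helim : Sum.elim (K ∘ Sum.inl) (K ∘ Sum.inr) = K := Sum.elim_comp_inl_inr K
      have hcond : (∀ x y : Fin m ⊕ Fin n,
          σ.r x y → Sum.elim (K ∘ Sum.inl) (K ∘ Sum.inr) x = Sum.elim (K ∘ Sum.inl) (K ∘ Sum.inr) y)
          ↔ σ ≤ π := by
        rw [helim]
        constructor
        · intro hc x y hxy
          exact (hK x y).1 (hc x y hxy)
        · intro hc x y hxy
          exact (hK x y).2 (hc hxy)
      rw [if_congr hcond rfl rfl]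
      split <;> simp
    exact (Finset.sum_congr rfl fun σ _ => (hterm σ).symm).trans h0
  -- triangularity: well-founded induction on the poset of setoids
  have wf : WellFounded ((· < ·) : Setoid (Fin m ⊕ Fin n) → Setoid (Fin m ⊕ Fin n) → Prop) :=
    Finite.to_wellFoundedLT.wf
  intro π
  induction π using wf.induction with
  | _ π IH =>
    have hev := eval π
    rw [← Finset.sum_filter] at hev
    have hsplit : Finset.univ.filter (fun σ : Setoid (Fin m ⊕ Fin n) => σ ≤ π)
        = insert π (Finset.univ.filter (fun σ => σ < π)) := by
      ext σ
      simp only [Finset.mem_filter, Finset.mem_insert, Finset.mem_univ, true_and]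
      rw [le_iff_lt_or_eq, or_comm]
    rw [hsplit, Finset.sum_insert (by simp)] at hev
    have hz : ∑ σ ∈ Finset.univ.filter (fun σ : Setoid (Fin m ⊕ Fin n) => σ < π), g σ = 0 :=
      Finset.sum_eq_zero fun σ hσ => IH σ (Finset.mem_filter.mp hσ).2
    rw [hz, add_zero] at hev
    exact hev
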